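/- Let λ ∈ 𝒫^l_n and let s, t be column-strict λ-tableaux. Then w_s ≤ w_t in the Bruhat order on S_n if and only if Shape(s↓m)' ⊵ Shape(t↓m)' for all m = 1,…,n. -/

import Mathlib

namespace FS

open scoped Classical

/-- A node `(r, c, m)`: row `r`, column `c`, component `m` (all 1-based). -/
abbrev Node := ℕ × ℕ × ℕ

/-- Membership of a node in the Young diagram of the multipartition `p`,
where `p m r` is the `r`-th part of the `m`-th component. -/
def InDiag (p : ℕ → ℕ → ℕ) (A : Node) : Prop :=
  1 ≤ A.2.1 ∧ A.2.1 ≤ p A.2.2 A.1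

/-- `p` is an `l`-multipartition of `n` (components indexed `1,…,l`, rows indexed `1,…`). -/
def IsMP (l n : ℕ) (p : ℕ → ℕ → ℕ) : Prop :=
  (∀ m r, (m = 0 ∨ l < m ∨ r = 0 ∨ n < r) → p m r = 0) ∧
  (∀ m r, 1 ≤ r → p m (r + 1) ≤ p m r) ∧
  (∑ m ∈ Finset.Icc 1 l, ∑ r ∈ Finset.Icc 1 n, p m r) = n

/-- Total size of an `l`-multicomposition (rows bounded by `n`). -/
def mpSize (l n : ℕ) (p : ℕ → ℕ → ℕ) : ℕ :=
  ∑ m ∈ Finset.Icc 1 l, ∑ r ∈ Finset.Icc 1 n, p m r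

/-- Size of the `m`-th component. -/
def compSize (n : ℕ) (p : ℕ → ℕ → ℕ) (m : ℕ) : ℕ :=
  ∑ r ∈ Finset.Icc 1 n, p m r

/-- Length of column `c` of component `m`, i.e. `(p^(m))'_c`. -/
def colLen (n : ℕ) (p : ℕ → ℕ → ℕ) (m c : ℕ) : ℕ :=
  ((Finset.Icc 1 n).filter fun r => c ≤ p m r).card

/-- Dominance order on `l`-multicompositions: `Dom l N p q` means `p ⊵ q`. -/
def Dom (l N : ℕ) (p q : ℕ → ℕ → ℕ) : Prop :=
  ∀ m r, 1 ≤ m → m ≤ l →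
    (∑ m' ∈ Finset.Icc 1 (m - 1), compSize N q m') + ∑ r' ∈ Finset.Icc 1 r, q m r' ≤
      (∑ m' ∈ Finset.Icc 1 (m - 1), compSize N p m') + ∑ r' ∈ Finset.Icc 1 r, p m r'

/-- `t` is a `p`-tableau: a bijection from the diagram of `p` onto `{1,…,n}`. -/
def IsTab (n : ℕ) (p : ℕ → ℕ → ℕ) (t : Node → ℕ) : Prop :=
  (∀ A, InDiag p A → 1 ≤ t A ∧ t A ≤ n) ∧
  (∀ A B, InDiag p A → InDiag p B → t A = t B → A = B) ∧
  (∀ i, 1 ≤ i → i ≤ n → ∃ A, InDiag p A ∧ t A = i)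

/-- Entries increase from left to right along each row. -/
def RowStrict (p : ℕ → ℕ → ℕ) (t : Node → ℕ) : Prop :=
  ∀ r c m, InDiag p (r, c, m) → InDiag p (r, c + 1, m) → t (r, c, m) < t (r, c + 1, m)

/-- Entries increase down each column. -/
def ColStrict (p : ℕ → ℕ → ℕ) (t : Node → ℕ) : Prop :=
  ∀ r c m, InDiag p (r, c, m) → InDiag p (r + 1, c, m) → t (r, c, m) < t (r + 1, c, m)

/-- A standard tableau is both row-strict and column-strict. -/
def IsStd (p : ℕ → ℕ → ℕ) (t : Node → ℕ) : Prop := RowStrict p t ∧ ColStrict p t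

/-- The tableau `t_λ`, obtained by writing `1,…,n` in order down successive columns
from left to right (components from `l` down to `1`). -/
def colTab (l n : ℕ) (p : ℕ → ℕ → ℕ) : Node → ℕ := fun A =>
  (∑ m' ∈ Finset.Icc (A.2.2 + 1) l, compSize n p m') +
    (∑ c' ∈ Finset.Icc 1 (A.2.1 - 1), colLen n p A.2.2 c') + A.1

/-- The tableau `t^λ`, obtained by writing `1,…,n` in order along successive rows
from top to bottom (components from `1` up to `l`). -/
def rowTab (n : ℕ) (p : ℕ → ℕ → ℕ) : Node → ℕ := fun A =>
  (∑ m' ∈ Finset.Icc 1 (A.2.2 - 1), compSize n p m') +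
    (∑ r' ∈ Finset.Icc 1 (A.1 - 1), p A.2.2 r') + A.2.1

/-- The Coxeter generator `s_i = (i, i+1)` of the symmetric group. -/
def sw (i : ℕ) : Equiv.Perm ℕ := Equiv.swap i (i + 1)

/-- The product `s_{i_1} ⋯ s_{i_k}` corresponding to a word `L = [i_1,…,i_k]`. -/
def wordProd (L : List ℕ) : Equiv.Perm ℕ := (L.map sw).prod

/-- `L` is an expression for `w` in the Coxeter generators `s_1,…,s_{n-1}` of `S_n`. -/
def IsWord (n : ℕ) (L : List ℕ) (w : Equiv.Perm ℕ) : Prop :=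
  (∀ i ∈ L, 1 ≤ i ∧ i + 1 ≤ n) ∧ wordProd L = w

/-- The Coxeter length of `w ∈ S_n`. -/
noncomputable def len (n : ℕ) (w : Equiv.Perm ℕ) : ℕ :=
  sInf {k | ∃ L, IsWord n L w ∧ L.length = k}

/-- `L` is a reduced expression for `w ∈ S_n`. -/
def IsReduced (n : ℕ) (L : List ℕ) (w : Equiv.Perm ℕ) : Prop :=
  IsWord n L w ∧ L.length = len n w

/-- The Bruhat order on `S_n`: `x ≤ w` iff some reduced expression for `w` has an
expression for `x` as a subsequence. -/
def BruhatLE (n : ℕ) (x w : Equiv.Perm ℕ) : Prop :=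
  ∃ L, IsReduced n L w ∧ ∃ L', L'.Sublist L ∧ wordProd L' = x

/-- Strict Bruhat order. -/
def BruhatLT (n : ℕ) (x w : Equiv.Perm ℕ) : Prop := BruhatLE n x w ∧ x ≠ w

/-- The left (weak) order on `S_n`: `x ≤_L w` iff `ℓ(w) = ℓ(w x⁻¹) + ℓ(x)`. -/
def LeftLE (n : ℕ) (x w : Equiv.Perm ℕ) : Prop :=
  len n w = len n (w * x⁻¹) + len n x

/-- `w` is a permutation of `{1,…,n}` (fixing everything else). -/
def PermOf (n : ℕ) (w : Equiv.Perm ℕ) : Prop := ∀ i, i = 0 ∨ n < i → w i = i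

/-- `w` is the permutation sending the base tableau `base` to the tableau `t`
(e.g. `w = w_t` when `base = t_λ`). -/
def IsPermOfTab (n : ℕ) (p : ℕ → ℕ → ℕ) (base t : Node → ℕ) (w : Equiv.Perm ℕ) : Prop :=
  PermOf n w ∧ ∀ A, InDiag p A → w (base A) = t A

/-- `Shape(t↓j)`: the multicomposition whose `(m, r)` entry is the number of nodes in
row `r` of component `m` whose entry under `t` is at most `j`. -/
def shape (n : ℕ) (p : ℕ → ℕ → ℕ) (t : Node → ℕ) (j : ℕ) : ℕ → ℕ → ℕ :=
  fun m r => ((Finset.Icc 1 n).filter fun c => c ≤ p m r ∧ t (r, c, m) ≤ j).card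

/-- `Shape(t↓j)'`: the conjugate multicomposition, whose `(m, c)` entry is the number of
nodes in column `c` of component `l + 1 - m` whose entry under `t` is at most `j`. -/
def shapeConj (l n : ℕ) (p : ℕ → ℕ → ℕ) (t : Node → ℕ) (j : ℕ) : ℕ → ℕ → ℕ :=
  fun m c => ((Finset.Icc 1 n).filter fun r => c ≤ p (l + 1 - m) r ∧ t (r, c, l + 1 - m) ≤ j).card

/-- `A` lies weakly to the left of `B`. -/
def WeaklyLeft (A B : Node) : Prop :=
  B.2.2 < A.2.2 ∨ (A.2.2 = B.2.2 ∧ A.2.1 ≤ B.2.1)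

/-- `A` lies weakly above `B`. -/
def WeaklyAbove (A B : Node) : Prop :=
  A.2.2 < B.2.2 ∨ (A.2.2 = B.2.2 ∧ A.1 ≤ B.1)

/-- `A` lies weakly to the right of `B`. -/
def WeaklyRight (A B : Node) : Prop :=
  A.2.2 < B.2.2 ∨ (A.2.2 = B.2.2 ∧ B.2.1 ≤ A.2.1)

/-- `t` (a `mu`-tableau) is `lam`-column-dominated on `1,…,j`: each `i ≤ j` appears in `t`
at least as far to the left as it does in `t_lam`. -/
def ColDomOn (l n : ℕ) (lam mu : ℕ → ℕ → ℕ) (t : Node → ℕ) (j : ℕ) : Prop :=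
  ∀ i A B, 1 ≤ i → i ≤ j → InDiag mu A → t A = i → InDiag lam B →
    colTab l n lam B = i → WeaklyLeft A B

/-- `t` is weakly `lam`-column-dominated on `1,…,j`: each `i ≤ j` appears in `t` in a
component at least as far to the left as it does in `t_lam`. -/
def WColDomOn (l n : ℕ) (lam mu : ℕ → ℕ → ℕ) (t : Node → ℕ) (j : ℕ) : Prop :=
  ∀ i A B, 1 ≤ i → i ≤ j → InDiag mu A → t A = i → InDiag lam B →
    colTab l n lam B = i → B.2.2 ≤ A.2.2

/-- `t` (a `mu`-tableau) is `lam`-row-dominated on `1,…,j`: each `i ≤ j` appears in `t`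
at least as high as it does in `t^lam`. -/
def RowDomOn (n : ℕ) (lam mu : ℕ → ℕ → ℕ) (t : Node → ℕ) (j : ℕ) : Prop :=
  ∀ i A B, 1 ≤ i → i ≤ j → InDiag mu A → t A = i → InDiag lam B →
    rowTab n lam B = i → WeaklyAbove A B

/-- The multipartition `λ_L(c, m)`: the first `c` columns of component `m`, followed by
components `m+1,…,l`. -/
def leftPart (lam : ℕ → ℕ → ℕ) (c m : ℕ) : ℕ → ℕ → ℕ := fun k r =>
  if k = 0 then 0 else if k = 1 then min (lam m r) c else lam (m + k - 1) r

/-- The multipartition `λ_R(c, m)`: components `1,…,m-1`, followed by the part of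
component `m` after its first `c` columns. -/
def rightPart (lam : ℕ → ℕ → ℕ) (c m : ℕ) : ℕ → ℕ → ℕ := fun k r =>
  if k < m then lam k r else if k = m then lam m r - c else 0

/-- The multipartition `λ_T(r₀, m)`: components `1,…,m-1`, followed by the first `r₀`
rows of component `m`. -/
def topPart (lam : ℕ → ℕ → ℕ) (r₀ m : ℕ) : ℕ → ℕ → ℕ := fun k r =>
  if k < m then lam k r else if k = m then (if r ≤ r₀ then lam m r else 0) else 0

/-- The multipartition `λ_B(r₀, m)`: the rows of component `m` after row `r₀`, followed
by components `m+1,…,l`. -/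
def botPart (lam : ℕ → ℕ → ℕ) (r₀ m : ℕ) : ℕ → ℕ → ℕ := fun k r =>
  if k = 0 ∨ r = 0 then 0 else if k = 1 then lam m (r₀ + r) else lam (m + k - 1) r

/-- The glued tableau `t_L # t_R`: places `1,…,n_L` on the left part as in `t_L`, and
places `n_L + t_R(A)` at the node corresponding to each node `A` of the right part. -/
def glueLR (nL c m : ℕ) (tL tR : Node → ℕ) : Node → ℕ := fun A =>
  if A.2.2 < m then nL + tR A
  else if A.2.2 = m then
    (if A.2.1 ≤ c then tL (A.1, A.2.1, 1) else nL + tR (A.1, A.2.1 - c, m))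
  else tL (A.1, A.2.1, A.2.2 - m + 1)

/-- The tableau `t⁺` obtained from a tableau `t` of `μ_R(1,m)` by increasing all entries
by `k`, adjoining a first column with entries `1,…,k` to component `m`, and adjoining
empty components `m+1,…,l`. -/
def addFirstCol (k m : ℕ) (t : Node → ℕ) : Node → ℕ := fun A =>
  if A.2.2 = m then (if A.2.1 = 1 then A.1 else k + t (A.1, A.2.1 - 1, m))
  else k + t A

/-- The tableau `t⁺` obtained from a tableau `t` of `μ_L(d-1,m)` by adjoining empty
components `1,…,m-1` and adjoining a column `d` to component `m` with entries
`nk+1,…,nk+k` from top to bottom. -/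
def addLastCol (nk m d : ℕ) (t : Node → ℕ) : Node → ℕ := fun A =>
  if A.2.2 = m then (if A.2.1 = d then nk + A.1 else t (A.1, A.2.1, 1))
  else t (A.1, A.2.1, A.2.2 - m + 1)

/-- The `i`-th smallest element of a finite set of naturals (1-based). -/
def nthElt (S : Finset ℕ) (i : ℕ) : ℕ := (S.sort (· ≤ ·)).getD (i - 1) 0

/-- The set `S_B` of entries of `t_λ` lying in the bottom region (component `> m`, or
component `m` in a row `> r₀`). -/
noncomputable def SB (l n : ℕ) (lam : ℕ → ℕ → ℕ) (r₀ m : ℕ) : Finset ℕ :=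
  (Finset.Icc 1 n).filter fun i =>
    ∃ A, InDiag lam A ∧ colTab l n lam A = i ∧ (m < A.2.2 ∨ (A.2.2 = m ∧ r₀ < A.1))

/-- The glued tableau `t #̄ s`: on the bottom region the entries are `lab_B ∘ t` and on
the top region they are `lab_T ∘ s`, where `lab_B`, `lab_T` are the order-preserving
bijections onto `S_B`, `S_T`. -/
def glueBT (S_B S_T : Finset ℕ) (r₀ m : ℕ) (tB tT : Node → ℕ) : Node → ℕ := fun A =>
  if A.2.2 < m then nthElt S_T (tT A)
  else if A.2.2 = m then
    (if A.1 ≤ r₀ then nthElt S_T (tT A) else nthElt S_B (tB (A.1 - r₀, A.2.1, 1)))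
  else nthElt S_B (tB (A.1, A.2.1, A.2.2 - m + 1))

/-- The residue of a node `(r, c, m)` with respect to the multicharge `κ`:
`κ_m + c - r` in `ℤ/eℤ` (with `ZMod 0 = ℤ` encoding `e = ∞`). -/
def resNode (e : ℕ) (κ : ℕ → ZMod e) (A : Node) : ZMod e :=
  κ A.2.2 + (A.2.1 : ZMod e) - (A.1 : ZMod e)

/-! ### Auxiliary theory: inversions, the dot (Ehresmann) criterion, Bruhat order -/

/-- Entry-counting statistic: number of positions `a ∈ [1,k]` with `w a ≤ j`. -/
noncomputable def E (k j : ℕ) (w : Equiv.Perm ℕ) : ℕ :=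
  ((Finset.Icc 1 k).filter fun a => w a ≤ j).card

/-- The dot (Ehresmann) order: `x ≤ w` iff `E k j w ≤ E k j x` for all `k, j`. -/
def Dot (x w : Equiv.Perm ℕ) : Prop := ∀ k j, E k j w ≤ E k j x

/-- Number of inversions of `w` among positions `1,…,n`. -/
noncomputable def inv (n : ℕ) (w : Equiv.Perm ℕ) : ℕ :=
  (((Finset.Icc 1 n) ×ˢ (Finset.Icc 1 n)).filter fun p => p.1 < p.2 ∧ w p.2 < w p.1).card

lemma sw_apply (i a : ℕ) : sw i a = if a = i then i + 1 else if a = i + 1 then i else a := by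
  unfold sw
  split_ifs with h1 h2
  · rw [h1, Equiv.swap_apply_left]
  · rw [h2, Equiv.swap_apply_right]
  · exact Equiv.swap_apply_of_ne_of_ne h1 h2

lemma sw_sw (i a : ℕ) : sw i (sw i a) = a := by
  simp only [sw_apply]; split_ifs <;> omega

lemma mul_sw_apply (w : Equiv.Perm ℕ) (i a : ℕ) : (w * sw i) a = w (sw i a) := rfl

lemma mul_sw_sw (w : Equiv.Perm ℕ) (i : ℕ) : w * sw i * sw i = w := by
  rw [mul_assoc]; unfold sw; rw [Equiv.swap_mul_self, mul_one]

lemma wordProd_nil : wordProd [] = 1 := rfl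

lemma wordProd_concat (L : List ℕ) (i : ℕ) :
    wordProd (L ++ [i]) = wordProd L * sw i := by
  unfold wordProd; rw [List.map_append, List.prod_append]; simp

lemma permOf_one (n : ℕ) : PermOf n 1 := fun _ _ => rfl

lemma permOf_mul {n : ℕ} {u v : Equiv.Perm ℕ} (hu : PermOf n u) (hv : PermOf n v) :
    PermOf n (u * v) := by
  intro a ha
  have := hv a ha
  show u (v a) = a
  rw [this, hu a ha]

lemma permOf_sw {n i : ℕ} (h1 : 1 ≤ i) (h2 : i + 1 ≤ n) : PermOf n (sw i) := by
  intro a ha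
  rw [sw_apply]
  split_ifs <;> omega

lemma permOf_wordProd {n : ℕ} {L : List ℕ} (h : ∀ x ∈ L, 1 ≤ x ∧ x + 1 ≤ n) :
    PermOf n (wordProd L) := by
  induction L with
  | nil => exact permOf_one n
  | cons i L ih =>
    have : wordProd (i :: L) = sw i * wordProd L := by
      unfold wordProd; simp
    rw [this]
    exact permOf_mul (permOf_sw (h i (by simp)).1 (h i (by simp)).2)
      (ih fun x hx => h x (by simp [hx]))

lemma permOf_mem {n : ℕ} {w : Equiv.Perm ℕ} (hw : PermOf n w) {a : ℕ}
    (ha : 1 ≤ a ∧ a ≤ n) : 1 ≤ w a ∧ w a ≤ n := by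
  by_contra h
  have h' : w a = 0 ∨ n < w a := by omega
  have := hw (w a) h'
  have : w a = a := w.injective this
  omega

lemma E_succ (k j : ℕ) (w : Equiv.Perm ℕ) :
    E (k + 1) j w = E k j w + if w (k + 1) ≤ j then 1 else 0 := by
  unfold E
  have : Finset.Icc 1 (k + 1) = insert (k + 1) (Finset.Icc 1 k) := by
    ext a; simp [Finset.mem_Icc, Finset.mem_insert]; omega
  rw [this, Finset.filter_insert]
  split_ifs with h
  · rw [Finset.card_insert_of_notMem (by simp [Finset.mem_Icc])]
  · simp

lemma E_zero (j : ℕ) (w : Equiv.Perm ℕ) : E 0 j w = 0 := by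
  unfold E; simp

lemma E_one_perm (k j : ℕ) : E k j 1 = min k j := by
  unfold E
  have : (Finset.Icc 1 k).filter (fun a => (1 : Equiv.Perm ℕ) a ≤ j) =
      Finset.Icc 1 (min k j) := by
    ext a
    rw [Finset.mem_filter]
    simp only [Finset.mem_filter, Finset.mem_Icc, Equiv.Perm.one_apply]
    omega
  rw [this, Nat.card_Icc]; omega

lemma E_mul_sw_lt {k i : ℕ} (hki : k < i) (j : ℕ) (w : Equiv.Perm ℕ) :
    E k j (w * sw i) = E k j w := by
  unfold E
  congr 1
  apply Finset.filter_congr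
  intro a ha
  simp only [Finset.mem_Icc] at ha
  have : sw i a = a := by rw [sw_apply]; split_ifs <;> omega
  rw [mul_sw_apply, this]

lemma E_mul_sw_gt {k i : ℕ} (hi : 1 ≤ i) (hki : i + 1 ≤ k) (j : ℕ) (w : Equiv.Perm ℕ) :
    E k j (w * sw i) = E k j w := by
  unfold E
  apply Finset.card_bij (fun a _ => sw i a)
  · intro a ha
    simp only [Finset.mem_filter, Finset.mem_Icc] at ha ⊢
    refine ⟨?_, by rw [← mul_sw_apply]; exact ha.2⟩
    rcases ha with ⟨⟨h1, h2⟩, _⟩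
    rw [sw_apply]; split_ifs <;> omega
  · intro a ha b hb hab
    have := congrArg (sw i) hab
    rwa [sw_sw, sw_sw] at this
  · intro b hb
    simp only [Finset.mem_filter, Finset.mem_Icc] at hb
    refine ⟨sw i b, ?_, sw_sw i b⟩
    rw [Finset.mem_filter]
    simp only [Finset.mem_filter, Finset.mem_Icc, mul_sw_apply, sw_sw]
    refine ⟨?_, hb.2⟩
    rcases hb with ⟨⟨h1, h2⟩, _⟩
    rw [sw_apply]; split_ifs <;> omega

lemma E_mul_sw_eq {i : ℕ} (hi : 1 ≤ i) (j : ℕ) (w : Equiv.Perm ℕ) :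
    E i j (w * sw i) = E (i - 1) j w + if w (i + 1) ≤ j then 1 else 0 := by
  obtain ⟨i', rfl⟩ : ∃ i', i = i' + 1 := ⟨i - 1, by omega⟩
  rw [E_succ, E_mul_sw_lt (by omega)]
  have h1 : sw (i' + 1) (i' + 1 + 1) = i' + 1 := by rw [sw_apply]; split_ifs <;> omega
  have h2 : sw (i' + 1) (i' + 1) = i' + 1 + 1 := by rw [sw_apply]; split_ifs <;> omega
  simp only [mul_sw_apply, h2]
  congr 1

lemma E_expand (i j : ℕ) (w : Equiv.Perm ℕ) (hi : 1 ≤ i) :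
    E i j w = E (i - 1) j w + (if w i ≤ j then 1 else 0) ∧
    E (i + 1) j w = E (i - 1) j w + (if w i ≤ j then 1 else 0)
      + (if w (i + 1) ≤ j then 1 else 0) := by
  obtain ⟨i', rfl⟩ : ∃ i', i = i' + 1 := ⟨i - 1, by omega⟩
  constructor
  · rw [E_succ]; congr 1
  · rw [E_succ, E_succ]; congr 2

lemma dot_refl (w : Equiv.Perm ℕ) : Dot w w := fun _ _ => le_refl _

/-- L1: multiplying by an ascent generator goes up in the dot order. -/
lemma dot_mul_ascent {i : ℕ} (hi : 1 ≤ i) {w : Equiv.Perm ℕ} (ha : w i < w (i + 1)) :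
    ∀ k j, E k j (w * sw i) ≤ E k j w := by
  intro k j
  rcases lt_trichotomy k i with h | h | h
  · rw [E_mul_sw_lt h]
  · subst h
    rw [E_mul_sw_eq hi, (E_expand k j w hi).1]
    split_ifs <;> omega
  · rw [E_mul_sw_gt hi (by omega)]

/-- L2: if `Dot x w` and `i` is an ascent of `w`, then `Dot (x * sw i) (w * sw i)`. -/
lemma dot_mul_mul {i : ℕ} (hi : 1 ≤ i) {x w : Equiv.Perm ℕ} (ha : w i < w (i + 1))
    (h : Dot x w) : Dot (x * sw i) (w * sw i) := by
  intro k j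
  rcases lt_trichotomy k i with hk | hk | hk
  · rw [E_mul_sw_lt hk, E_mul_sw_lt hk]; exact h k j
  · subst hk
    rw [E_mul_sw_eq hi, E_mul_sw_eq hi]
    have h1 := h (k - 1) j
    have h2 := h k j
    have h3 := h (k + 1) j
    obtain ⟨ew1, ew2⟩ := E_expand k j w hi
    obtain ⟨ex1, ex2⟩ := E_expand k j x hi
    rw [ew1] at h2; rw [ex1] at h2
    rw [ew2] at h3; rw [ex2] at h3
    split_ifs at * <;> omega
  · rw [E_mul_sw_gt hi (by omega), E_mul_sw_gt hi (by omega)]; exact h k j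

/-- L3: lifting when both `w` and `x` have a descent at `i`. -/
lemma dot_lift_descent {i : ℕ} (hi : 1 ≤ i) {x w : Equiv.Perm ℕ} (hw : w (i + 1) < w i)
    (hx : x (i + 1) < x i) (h : Dot x w) : Dot (x * sw i) (w * sw i) := by
  intro k j
  rcases lt_trichotomy k i with hk | hk | hk
  · rw [E_mul_sw_lt hk, E_mul_sw_lt hk]; exact h k j
  · subst hk
    rw [E_mul_sw_eq hi, E_mul_sw_eq hi]
    have h1 := h (k - 1) j
    have h2 := h k j
    have h3 := h (k + 1) j
    obtain ⟨ew1, ew2⟩ := E_expand k j w hi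
    obtain ⟨ex1, ex2⟩ := E_expand k j x hi
    rw [ew1, ex1] at h2
    rw [ew2, ex2] at h3
    split_ifs at * <;> omega
  · rw [E_mul_sw_gt hi (by omega), E_mul_sw_gt hi (by omega)]; exact h k j

/-- L4: lifting when `w` has a descent at `i` but `x` has an ascent. -/
lemma dot_lift_mixed {i : ℕ} (hi : 1 ≤ i) {x w : Equiv.Perm ℕ} (hw : w (i + 1) < w i)
    (hx : x i < x (i + 1)) (h : Dot x w) : Dot x (w * sw i) := by
  intro k j
  rcases lt_trichotomy k i with hk | hk | hk
  · rw [E_mul_sw_lt hk]; exact h k j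
  · subst hk
    rw [E_mul_sw_eq hi]
    have h1 := h (k - 1) j
    have h2 := h k j
    have h3 := h (k + 1) j
    obtain ⟨ew1, ew2⟩ := E_expand k j w hi
    obtain ⟨ex1, ex2⟩ := E_expand k j x hi
    rw [ew1, ex1] at h2
    rw [ew2, ex2] at h3
    rw [ex1]
    split_ifs at * <;> omega
  · rw [E_mul_sw_gt hi (by omega)]; exact h k j

lemma sw_mem_Icc {n i a : ℕ} (hi : 1 ≤ i) (hin : i + 1 ≤ n) (ha : a ∈ Finset.Icc 1 n) :
    sw i a ∈ Finset.Icc 1 n := by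
  simp only [Finset.mem_Icc] at ha ⊢
  rw [sw_apply]; split_ifs <;> omega

lemma sw_order_pres {i a b : ℕ} (hab : a < b) (h : ¬(a = i ∧ b = i + 1)) :
    sw i a < sw i b := by
  simp only [sw_apply]; split_ifs <;> omega

lemma inv_mul_sw_of_descent {n i : ℕ} (hi : 1 ≤ i) (hin : i + 1 ≤ n)
    {w : Equiv.Perm ℕ} (hd : w (i + 1) < w i) :
    inv n (w * sw i) + 1 = inv n w := by
  classical
  unfold inv
  have hmem : ((i, i + 1) : ℕ × ℕ) ∈
      ((Finset.Icc 1 n ×ˢ Finset.Icc 1 n).filter fun p => p.1 < p.2 ∧ w p.2 < w p.1) := by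
    simp only [Finset.mem_filter, Finset.mem_product, Finset.mem_Icc]
    exact ⟨⟨⟨hi, by omega⟩, ⟨by omega, hin⟩⟩, by omega, hd⟩
  have hcard : ((Finset.Icc 1 n ×ˢ Finset.Icc 1 n).filter
      fun p => p.1 < p.2 ∧ (w * sw i) p.2 < (w * sw i) p.1).card =
      (((Finset.Icc 1 n ×ˢ Finset.Icc 1 n).filter
      fun p => p.1 < p.2 ∧ w p.2 < w p.1).erase (i, i + 1)).card := by
    apply Finset.card_bij (fun p _ => (sw i p.1, sw i p.2))
    · rintro ⟨a, b⟩ hp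
      rw [Finset.mem_filter] at hp
      simp only [Finset.mem_filter, Finset.mem_product, mul_sw_apply] at hp
      obtain ⟨⟨ha, hb⟩, hab, hinv⟩ := hp
      have hne : ¬(a = i ∧ b = i + 1) := by
        rintro ⟨rfl, rfl⟩
        have e1 : sw a a = a + 1 := by rw [sw_apply]; split_ifs <;> omega
        have e2 : sw a (a + 1) = a := by rw [sw_apply]; split_ifs <;> omega
        rw [e1, e2] at hinv
        omega
      have hord := sw_order_pres hab hne
      rw [Finset.mem_erase]
      constructor
      · intro heq
        have h1 : sw i a = i := congrArg Prod.fst heq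
        have h2 : sw i b = i + 1 := congrArg Prod.snd heq
        have ha' := congrArg (sw i) h1
        have hb' := congrArg (sw i) h2
        rw [sw_sw] at ha' hb'
        have e1 : sw i i = i + 1 := by rw [sw_apply]; split_ifs <;> omega
        have e2 : sw i (i + 1) = i := by rw [sw_apply]; split_ifs <;> omega
        rw [e1] at ha'; rw [e2] at hb'
        omega
      · simp only [Finset.mem_filter, Finset.mem_product]
        exact ⟨⟨sw_mem_Icc hi hin ha, sw_mem_Icc hi hin hb⟩, hord, hinv⟩
    · rintro ⟨a, b⟩ _ ⟨c, d⟩ _ heq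
      have h1 : sw i a = sw i c := congrArg Prod.fst heq
      have h2 : sw i b = sw i d := congrArg Prod.snd heq
      have e1 : a = c := by rw [← sw_sw i a, h1, sw_sw]
      have e2 : b = d := by rw [← sw_sw i b, h2, sw_sw]
      rw [e1, e2]
    · rintro ⟨a, b⟩ hq
      simp only [Finset.mem_erase, Finset.mem_filter, Finset.mem_product] at hq
      obtain ⟨hne, ⟨ha, hb⟩, hab, hinv⟩ := hq
      refine ⟨(sw i a, sw i b), ?_, by simp [sw_sw]⟩
      rw [Finset.mem_filter]
      simp only [Finset.mem_filter, Finset.mem_product, mul_sw_apply, sw_sw]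
      have hne' : ¬(a = i ∧ b = i + 1) := by
        rintro ⟨rfl, rfl⟩; exact hne rfl
      exact ⟨⟨sw_mem_Icc hi hin ha, sw_mem_Icc hi hin hb⟩, sw_order_pres hab hne', hinv⟩
  rw [hcard]
  have : 1 ≤ ((Finset.Icc 1 n ×ˢ Finset.Icc 1 n).filter
      fun p => p.1 < p.2 ∧ w p.2 < w p.1).card := Finset.card_pos.mpr ⟨_, hmem⟩
  rw [Finset.card_erase_of_mem hmem]
  omega

lemma inv_mul_sw_of_ascent {n i : ℕ} (hi : 1 ≤ i) (hin : i + 1 ≤ n)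
    {w : Equiv.Perm ℕ} (ha : w i < w (i + 1)) :
    inv n (w * sw i) = inv n w + 1 := by
  have e1 : (w * sw i) (i + 1) = w i := by
    rw [mul_sw_apply, sw_apply]; split_ifs <;> omega
  have e2 : (w * sw i) i = w (i + 1) := by
    rw [mul_sw_apply, sw_apply]; split_ifs <;> omega
  have := inv_mul_sw_of_descent hi hin (w := w * sw i) (by rw [e1, e2]; exact ha)
  rw [mul_sw_sw] at this
  omega

lemma invn_one (n : ℕ) : inv n 1 = 0 := by
  unfold inv
  rw [Finset.card_eq_zero, Finset.filter_eq_empty_iff]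
  rintro ⟨a, b⟩ _
  simp only [Equiv.Perm.one_apply]
  omega

lemma swap_ne_apply {w : Equiv.Perm ℕ} {i : ℕ} : w i ≠ w (i + 1) := by
  intro h
  have := w.injective h
  omega

lemma inv_mul_sw_le {n i : ℕ} (hi : 1 ≤ i) (hin : i + 1 ≤ n) (w : Equiv.Perm ℕ) :
    inv n (w * sw i) ≤ inv n w + 1 := by
  rcases lt_trichotomy (w i) (w (i + 1)) with h | h | h
  · rw [inv_mul_sw_of_ascent hi hin h]
  · exact absurd h swap_ne_apply
  · have := inv_mul_sw_of_descent hi hin h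
    omega

lemma le_self_eq_one {u : Equiv.Perm ℕ} (h : ∀ a, u a ≤ a) : u = 1 := by
  have key : ∀ a, u a = a := by
    intro a
    induction a using Nat.strong_induction_on with
    | _ a ih =>
      rcases lt_or_eq_of_le (h a) with hlt | heq
      · have h2 : u (u a) = u a := ih (u a) hlt
        have := u.injective h2
        omega
      · exact heq
  exact Equiv.ext key

lemma permOf_inv {n : ℕ} {w : Equiv.Perm ℕ} (hw : PermOf n w) : PermOf n w⁻¹ := by
  intro a ha
  have h := hw a ha
  conv_lhs => rw [← h]
  exact w.symm_apply_apply a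

lemma increasing_eq_one {n : ℕ} {w : Equiv.Perm ℕ} (hw : PermOf n w)
    (h : ∀ i, 1 ≤ i → i + 1 ≤ n → w i < w (i + 1)) : w = 1 := by
  have hmid : ∀ a, 1 ≤ a → a ≤ n → a ≤ w a := by
    intro a
    induction a with
    | zero => omega
    | succ a iha =>
      intro _ hsn
      rcases Nat.eq_zero_or_pos a with rfl | ha
      · exact (permOf_mem hw ⟨le_refl 1, hsn⟩).1
      · have h1 := iha ha (by omega)
        have h2 := h a ha hsn
        omega
  have hge : ∀ a, a ≤ w a := by
    intro a
    rcases Nat.lt_or_ge a 1 with h0 | h1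
    · omega
    · rcases le_or_gt a n with h2 | h2
      · exact hmid a h1 h2
      · rw [hw a (Or.inr h2)]
  have hinvle : ∀ a, w⁻¹ a ≤ a := by
    intro a
    have := hge (w⁻¹ a)
    rwa [Equiv.Perm.inv_def, Equiv.apply_symm_apply] at this
  have : w⁻¹ = 1 := le_self_eq_one hinvle
  rw [← inv_inv w, this, _root_.inv_one]

lemma exists_descent {n : ℕ} {w : Equiv.Perm ℕ} (hw : PermOf n w) (hne : w ≠ 1) :
    ∃ i, 1 ≤ i ∧ i + 1 ≤ n ∧ w (i + 1) < w i := by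
  by_contra h
  push_neg at h
  refine hne (increasing_eq_one hw fun i h1 h2 => ?_)
  have h3 := h i h1 h2
  have h4 : w i ≠ w (i + 1) := swap_ne_apply
  omega

lemma eq_one_of_invn_eq_zero {n : ℕ} {w : Equiv.Perm ℕ} (hw : PermOf n w)
    (h : inv n w = 0) : w = 1 := by
  by_contra hne
  obtain ⟨i, h1, h2, h3⟩ := exists_descent hw hne
  have hmem : ((i, i + 1) : ℕ × ℕ) ∈
      ((Finset.Icc 1 n ×ˢ Finset.Icc 1 n).filter fun p => p.1 < p.2 ∧ w p.2 < w p.1) := by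
    simp only [Finset.mem_filter, Finset.mem_product, Finset.mem_Icc]
    exact ⟨⟨⟨h1, by omega⟩, ⟨by omega, h2⟩⟩, by omega, h3⟩
  have : inv n w ≠ 0 := by
    unfold inv
    exact Finset.card_ne_zero_of_mem hmem
  exact this h

lemma inv_wordProd_le {n : ℕ} (L : List ℕ) (hL : ∀ x ∈ L, 1 ≤ x ∧ x + 1 ≤ n) :
    inv n (wordProd L) ≤ L.length := by
  induction L using List.reverseRecOn with
  | nil => rw [wordProd_nil, invn_one]; simp
  | append_singleton L i ih =>
    rw [wordProd_concat]
    have hi := hL i (by simp)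
    have h1 := inv_mul_sw_le hi.1 hi.2 (wordProd L)
    have h2 := ih fun x hx => hL x (by simp [hx])
    simp only [List.length_append, List.length_singleton]
    omega

lemma exists_word {n : ℕ} : ∀ (N : ℕ) (w : Equiv.Perm ℕ), PermOf n w → inv n w = N →
    ∃ L, IsWord n L w ∧ L.length = inv n w := by
  intro N
  induction N using Nat.strong_induction_on with
  | _ N ih =>
    intro w hw hN
    by_cases h1 : w = 1
    · subst h1
      exact ⟨[], ⟨fun x hx => absurd hx List.not_mem_nil, wordProd_nil⟩,
        by simp [invn_one]⟩
    · obtain ⟨i, hi1, hi2, hi3⟩ := exists_descent hw h1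
      have hd := inv_mul_sw_of_descent hi1 hi2 hi3
      have hw' : PermOf n (w * sw i) := permOf_mul hw (permOf_sw hi1 hi2)
      obtain ⟨L', hL', hlen'⟩ := ih (inv n (w * sw i)) (by omega) (w * sw i) hw' rfl
      refine ⟨L' ++ [i], ⟨?_, ?_⟩, ?_⟩
      · intro x hx
        rcases List.mem_append.mp hx with h | h
        · exact hL'.1 x h
        · rw [List.mem_singleton] at h; subst h; exact ⟨hi1, hi2⟩
      · rw [wordProd_concat, hL'.2, mul_sw_sw]
      · simp only [List.length_append, List.length_singleton]
        omega

lemma len_eq_inv {n : ℕ} {w : Equiv.Perm ℕ} (hw : PermOf n w) : len n w = inv n w := by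
  obtain ⟨L, hL, hlen⟩ := exists_word (inv n w) w hw rfl
  unfold len
  apply le_antisymm
  · exact Nat.sInf_le ⟨L, hL, hlen⟩
  · refine le_csInf ⟨_, L, hL, hlen⟩ ?_
    rintro k ⟨L', hL', rfl⟩
    rw [← hL'.2]
    exact inv_wordProd_le L' hL'.1

lemma dot_trans {x y z : Equiv.Perm ℕ} (h1 : Dot x y) (h2 : Dot y z) : Dot x z :=
  fun k j => le_trans (h2 k j) (h1 k j)

/-- If `L₀ ++ [i]` is a reduced word, then `L₀` is reduced and `i` is an ascent
of `wordProd L₀`. -/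
lemma reduced_concat {n : ℕ} {L₀ : List ℕ} {i : ℕ}
    (hlet : ∀ x ∈ L₀ ++ [i], 1 ≤ x ∧ x + 1 ≤ n)
    (hred : (L₀ ++ [i]).length = len n (wordProd (L₀ ++ [i]))) :
    L₀.length = len n (wordProd L₀) ∧
      wordProd L₀ i < wordProd L₀ (i + 1) := by
  have hlet0 : ∀ x ∈ L₀, 1 ≤ x ∧ x + 1 ≤ n := fun x hx => hlet x (by simp [hx])
  have hi := hlet i (by simp)
  set w₀ := wordProd L₀ with hw₀
  have hw₀p : PermOf n w₀ := permOf_wordProd hlet0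
  have hwp : PermOf n (wordProd (L₀ ++ [i])) := permOf_wordProd hlet
  rw [len_eq_inv hwp] at hred
  rw [wordProd_concat, ← hw₀] at hred
  have hle : inv n w₀ ≤ L₀.length := inv_wordProd_le L₀ hlet0
  simp only [List.length_append, List.length_singleton] at hred
  have hasc : w₀ i < w₀ (i + 1) := by
    rcases lt_trichotomy (w₀ i) (w₀ (i + 1)) with h | h | h
    · exact h
    · exact absurd h swap_ne_apply
    · have := inv_mul_sw_of_descent hi.1 hi.2 h
      omega
  have heq : inv n (w₀ * sw i) = inv n w₀ + 1 := inv_mul_sw_of_ascent hi.1 hi.2 hasc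
  rw [heq] at hred
  rw [len_eq_inv hw₀p]
  exact ⟨by omega, hasc⟩

lemma dot_of_sublist {n : ℕ} : ∀ (L : List ℕ), (∀ x ∈ L, 1 ≤ x ∧ x + 1 ≤ n) →
    L.length = len n (wordProd L) →
    ∀ M, M.Sublist L → Dot (wordProd M) (wordProd L) := by
  intro L
  induction L using List.reverseRecOn with
  | nil =>
    intro _ _ M hM
    rw [List.sublist_nil.mp hM]
    exact dot_refl _
  | append_singleton L₀ i ih =>
    intro hlet hred M hM
    obtain ⟨hred₀, hasc⟩ := reduced_concat hlet hred
    have hlet0 : ∀ x ∈ L₀, 1 ≤ x ∧ x + 1 ≤ n := fun x hx => hlet x (by simp [hx])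
    have hi := hlet i (by simp)
    rw [wordProd_concat]
    rcases List.sublist_append_iff.mp hM with ⟨M₁, M₂, rfl, hM₁, hM₂⟩
    rcases List.sublist_singleton.mp hM₂ with rfl | rfl
    · rw [List.append_nil]
      have hd := ih hlet0 hred₀ M₁ hM₁
      exact dot_trans hd (dot_mul_ascent hi.1 hasc)
    · rw [wordProd_concat]
      exact dot_mul_mul hi.1 hasc (ih hlet0 hred₀ M₁ hM₁)

lemma bruhat_imp_dot {n : ℕ} {x w : Equiv.Perm ℕ} (h : BruhatLE n x w) : Dot x w := by
  obtain ⟨L, ⟨⟨hlet, hprod⟩, hlen⟩, M, hM, hMprod⟩ := h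
  rw [← hprod, ← hMprod]
  exact dot_of_sublist L hlet (by rw [hprod]; exact hlen) M hM

lemma eq_one_of_dot_one {n : ℕ} {x : Equiv.Perm ℕ} (hx : PermOf n x) (h : Dot x 1) :
    x = 1 := by
  apply le_self_eq_one
  have key : ∀ k a, 1 ≤ a → a ≤ k → x a ≤ k := by
    intro k a h1 h2
    have hE := h k k
    rw [E_one_perm] at hE
    have hsub : (Finset.Icc 1 k).filter (fun a => x a ≤ k) ⊆ Finset.Icc 1 k :=
      Finset.filter_subset _ _
    have hcard : (Finset.Icc 1 k).card ≤ ((Finset.Icc 1 k).filter fun a => x a ≤ k).card := by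
      unfold E at hE
      rw [Nat.card_Icc]
      omega
    have heq := Finset.eq_of_subset_of_card_le hsub hcard
    have : a ∈ (Finset.Icc 1 k).filter (fun a => x a ≤ k) := by
      rw [heq]; simp [Finset.mem_Icc]; omega
    exact (Finset.mem_filter.mp this).2
  intro a
  rcases Nat.eq_zero_or_pos a with rfl | ha
  · rw [hx 0 (Or.inl rfl)]
  · exact key a a ha (le_refl a)

lemma dot_imp_bruhat {n : ℕ} : ∀ (N : ℕ) (x w : Equiv.Perm ℕ), PermOf n x → PermOf n w →
    inv n w = N → Dot x w → BruhatLE n x w := by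
  intro N
  induction N using Nat.strong_induction_on with
  | _ N ih =>
    intro x w hx hw hN hdot
    by_cases h1 : w = 1
    · subst h1
      have hx1 := eq_one_of_dot_one hx hdot
      subst hx1
      refine ⟨[], ⟨⟨fun y hy => absurd hy List.not_mem_nil, wordProd_nil⟩, ?_⟩,
        [], List.Sublist.refl _, wordProd_nil⟩
      rw [len_eq_inv (permOf_one n), invn_one]
      rfl
    · obtain ⟨i, hi1, hi2, hdesc⟩ := exists_descent hw h1
      have hinv := inv_mul_sw_of_descent hi1 hi2 hdesc
      have hw' : PermOf n (w * sw i) := permOf_mul hw (permOf_sw hi1 hi2)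
      rcases lt_trichotomy (x i) (x (i + 1)) with hxc | hxc | hxc
      · -- ascent of x: Dot x (w * sw i)
        have hdot' : Dot x (w * sw i) := dot_lift_mixed hi1 hdesc hxc hdot
        obtain ⟨L, ⟨⟨hlet, hprod⟩, hlen⟩, M, hM, hMprod⟩ :=
          ih (inv n (w * sw i)) (by omega) x (w * sw i) hx hw' rfl hdot'
        refine ⟨L ++ [i], ⟨⟨?_, ?_⟩, ?_⟩, M, hM.trans (List.sublist_append_left L [i]),
          hMprod⟩
        · intro y hy
          rcases List.mem_append.mp hy with hh | hh
          · exact hlet y hh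
          · rw [List.mem_singleton] at hh; subst hh; exact ⟨hi1, hi2⟩
        · rw [wordProd_concat, hprod, mul_sw_sw]
        · rw [len_eq_inv hw]
          simp only [List.length_append, List.length_singleton]
          rw [hlen, len_eq_inv hw']
          omega
      · exact absurd (x.injective hxc) (by omega)
      · -- descent of x
        have hdot' : Dot (x * sw i) (w * sw i) := dot_lift_descent hi1 hdesc hxc hdot
        have hx' : PermOf n (x * sw i) := permOf_mul hx (permOf_sw hi1 hi2)
        obtain ⟨L, ⟨⟨hlet, hprod⟩, hlen⟩, M, hM, hMprod⟩ :=
          ih (inv n (w * sw i)) (by omega) (x * sw i) (w * sw i) hx' hw' rfl hdot'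
        refine ⟨L ++ [i], ⟨⟨?_, ?_⟩, ?_⟩, M ++ [i],
          hM.append (List.Sublist.refl [i]), ?_⟩
        · intro y hy
          rcases List.mem_append.mp hy with hh | hh
          · exact hlet y hh
          · rw [List.mem_singleton] at hh; subst hh; exact ⟨hi1, hi2⟩
        · rw [wordProd_concat, hprod, mul_sw_sw]
        · rw [len_eq_inv hw]
          simp only [List.length_append, List.length_singleton]
          rw [hlen, len_eq_inv hw']
          omega
        · rw [wordProd_concat, hMprod, mul_sw_sw]

/-! ### Auxiliary theory: multipartition combinatorics -/

/-- Offset: number of nodes in components strictly after `m₀` in column-reading order. -/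
noncomputable def Off (l n : ℕ) (lam : ℕ → ℕ → ℕ) (m₀ : ℕ) : ℕ :=
  ∑ m' ∈ Finset.Icc (m₀ + 1) l, compSize n lam m'

/-- Number of nodes in components after `m₀` together with the first `r` columns of
component `m₀`. -/
noncomputable def NN (l n : ℕ) (lam : ℕ → ℕ → ℕ) (m₀ r : ℕ) : ℕ :=
  Off l n lam m₀ + ∑ c ∈ Finset.Icc 1 r, colLen n lam m₀ c

/-- The Young diagram as a finset. -/
noncomputable def DiagF (l n : ℕ) (lam : ℕ → ℕ → ℕ) : Finset Node :=
  (Finset.Icc 1 n ×ˢ Finset.Icc 1 n ×ˢ Finset.Icc 1 l).filter (InDiag lam)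

section MP

variable {l n : ℕ} {lam : ℕ → ℕ → ℕ}

lemma lam_anti (hlam : IsMP l n lam) (m : ℕ) {r r' : ℕ} (h1 : 1 ≤ r) (h2 : r ≤ r') :
    lam m r' ≤ lam m r := by
  obtain ⟨d, rfl⟩ : ∃ d, r' = r + d := ⟨r' - r, by omega⟩
  clear h2
  induction d with
  | zero => exact le_refl _
  | succ d ih =>
    have : r + (d + 1) = (r + d) + 1 := by omega
    rw [this]
    exact le_trans (hlam.2.1 m (r + d) (by omega)) ih

lemma part_le_n (hlam : IsMP l n lam) {m r : ℕ} (hm : 1 ≤ m) (hml : m ≤ l)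
    (hr : 1 ≤ r) (hrn : r ≤ n) : lam m r ≤ n := by
  have h1 : lam m r ≤ compSize n lam m :=
    Finset.single_le_sum (f := fun r' => lam m r') (fun _ _ => Nat.zero_le _)
      (Finset.mem_Icc.mpr ⟨hr, hrn⟩)
  have h2 : compSize n lam m ≤ n := by
    conv_rhs => rw [← hlam.2.2]
    exact Finset.single_le_sum (f := fun m' => compSize n lam m')
      (fun _ _ => Nat.zero_le _) (Finset.mem_Icc.mpr ⟨hm, hml⟩)
  omega

lemma inDiag_ranges (hlam : IsMP l n lam) {A : Node} (h : InDiag lam A) :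
    1 ≤ A.1 ∧ A.1 ≤ n ∧ 1 ≤ A.2.1 ∧ A.2.1 ≤ n ∧ 1 ≤ A.2.2 ∧ A.2.2 ≤ l := by
  obtain ⟨r, c, m⟩ := A
  unfold InDiag at h
  simp only at h ⊢
  obtain ⟨h1, h2⟩ := h
  have hpos : 1 ≤ lam m r := le_trans h1 h2
  have hr : 1 ≤ r ∧ r ≤ n := by
    by_contra hc
    have := hlam.1 m r (by omega)
    omega
  have hm : 1 ≤ m ∧ m ≤ l := by
    by_contra hc
    have := hlam.1 m r (by omega)
    omega
  have hcn : c ≤ n := le_trans h2 (part_le_n hlam hm.1 hm.2 hr.1 hr.2)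
  exact ⟨hr.1, hr.2, h1, hcn, hm.1, hm.2⟩

lemma mem_DiagF (hlam : IsMP l n lam) {A : Node} :
    A ∈ DiagF l n lam ↔ InDiag lam A := by
  unfold DiagF
  rw [Finset.mem_filter]
  constructor
  · exact fun h => h.2
  · intro h
    have hr := inDiag_ranges hlam h
    refine ⟨?_, h⟩
    simp only [Finset.mem_product, Finset.mem_Icc]
    exact ⟨⟨hr.1, hr.2.1⟩, ⟨hr.2.2.1, hr.2.2.2.1⟩, hr.2.2.2.2⟩

lemma colLen_iff (hlam : IsMP l n lam) {m c r : ℕ} (hr : 1 ≤ r) (hrn : r ≤ n) :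
    c ≤ lam m r ↔ r ≤ colLen n lam m c := by
  unfold colLen
  constructor
  · intro h
    have hsub : Finset.Icc 1 r ⊆ (Finset.Icc 1 n).filter fun r' => c ≤ lam m r' := by
      intro r'' h''
      rw [Finset.mem_Icc] at h''
      rw [Finset.mem_filter, Finset.mem_Icc]
      exact ⟨⟨h''.1, le_trans h''.2 hrn⟩, le_trans h (lam_anti hlam m h''.1 h''.2)⟩
    have := Finset.card_le_card hsub
    rwa [Nat.card_Icc, Nat.add_sub_cancel] at this
  · intro h
    by_contra hc
    push_neg at hc
    have hsub : ((Finset.Icc 1 n).filter fun r' => c ≤ lam m r') ⊆ Finset.Icc 1 (r - 1) := by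
      intro r'' h''
      rw [Finset.mem_filter, Finset.mem_Icc] at h''
      rw [Finset.mem_Icc]
      refine ⟨h''.1.1, ?_⟩
      by_contra hge
      have : lam m r'' ≤ lam m r := lam_anti hlam m hr (by omega)
      omega
    have := Finset.card_le_card hsub
    rw [Nat.card_Icc] at this
    omega

lemma colLen_le_n (m c : ℕ) : colLen n lam m c ≤ n := by
  unfold colLen
  calc ((Finset.Icc 1 n).filter fun r => c ≤ lam m r).card
      ≤ (Finset.Icc 1 n).card := Finset.card_le_card (Finset.filter_subset _ _)
  _ = n := by rw [Nat.card_Icc]; omega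

lemma colLen_eq_zero (hlam : IsMP l n lam) {m c : ℕ} (hm : 1 ≤ m) (hml : m ≤ l)
    (hc : n < c) : colLen n lam m c = 0 := by
  unfold colLen
  rw [Finset.card_eq_zero, Finset.filter_eq_empty_iff]
  intro r hr
  rw [Finset.mem_Icc] at hr
  have := part_le_n hlam hm hml hr.1 hr.2
  omega

lemma sum_colLen (hlam : IsMP l n lam) {m : ℕ} (hm : 1 ≤ m) (hml : m ≤ l) :
    ∑ c ∈ Finset.Icc 1 n, colLen n lam m c = compSize n lam m := by
  unfold colLen compSize
  have h1 : ∀ c ∈ Finset.Icc 1 n, ((Finset.Icc 1 n).filter fun r => c ≤ lam m r).card =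
      ∑ r ∈ Finset.Icc 1 n, if c ≤ lam m r then 1 else 0 := fun c _ =>
    Finset.card_filter _ _
  rw [Finset.sum_congr rfl h1, Finset.sum_comm]
  apply Finset.sum_congr rfl
  intro r hr
  rw [Finset.mem_Icc] at hr
  have hle := part_le_n hlam hm hml hr.1 hr.2
  have : ∀ c ∈ Finset.Icc 1 n, (if c ≤ lam m r then (1 : ℕ) else 0) =
      (if c ∈ Finset.Icc 1 (lam m r) then 1 else 0) := by
    intro c hc
    rw [Finset.mem_Icc] at hc
    simp only [Finset.mem_Icc]
    split_ifs <;> omega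
  rw [Finset.sum_congr rfl this]
  have h2 : ∀ c ∈ Finset.Icc 1 n, (if c ∈ Finset.Icc 1 (lam m r) then (1:ℕ) else 0) =
      (if c ≤ lam m r then 1 else 0) := by
    intro c hc
    rw [Finset.mem_Icc] at hc
    simp only [Finset.mem_Icc]
    split_ifs <;> omega
  rw [Finset.sum_congr rfl h2, ← Finset.card_filter]
  have h3 : ((Finset.Icc 1 n).filter fun c => c ≤ lam m r) = Finset.Icc 1 (lam m r) := by
    ext c
    simp only [Finset.mem_filter, Finset.mem_Icc]
    omega
  rw [h3, Nat.card_Icc]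
  omega

lemma sum_colLen_eq_of_ge (hlam : IsMP l n lam) {m : ℕ} (hm : 1 ≤ m) (hml : m ≤ l)
    {r : ℕ} (h : n ≤ r) :
    ∑ c ∈ Finset.Icc 1 r, colLen n lam m c = compSize n lam m := by
  rw [← sum_colLen hlam hm hml]
  symm
  apply Finset.sum_subset (Finset.Icc_subset_Icc_right h)
  intro c hc hc'
  rw [Finset.mem_Icc] at hc hc'
  exact colLen_eq_zero hlam hm hml (by omega)

lemma sum_colLen_le (hlam : IsMP l n lam) {m : ℕ} (hm : 1 ≤ m) (hml : m ≤ l) (r : ℕ) :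
    ∑ c ∈ Finset.Icc 1 r, colLen n lam m c ≤ compSize n lam m := by
  rcases le_or_gt r n with h | h
  · rw [← sum_colLen hlam hm hml]
    exact Finset.sum_le_sum_of_subset (Finset.Icc_subset_Icc_right h)
  · rw [sum_colLen_eq_of_ge hlam hm hml (le_of_lt h)]

lemma Off_pred (hlam : IsMP l n lam) {m₀ : ℕ} (hm : 1 ≤ m₀) (hml : m₀ ≤ l) :
    Off l n lam (m₀ - 1) = compSize n lam m₀ + Off l n lam m₀ := by
  unfold Off
  have h1 : Finset.Icc (m₀ - 1 + 1) l = insert m₀ (Finset.Icc (m₀ + 1) l) := by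
    ext a
    simp only [Finset.mem_Icc, Finset.mem_insert]
    omega
  rw [h1, Finset.sum_insert (by simp [Finset.mem_Icc])]

lemma Off_le (hlam : IsMP l n lam) {m₀ m₁ : ℕ} (h : m₁ ≤ m₀) :
    Off l n lam m₀ ≤ Off l n lam m₁ :=
  Finset.sum_le_sum_of_subset (Finset.Icc_subset_Icc_left (by omega))

lemma Off_le_n (hlam : IsMP l n lam) (m₀ : ℕ) : Off l n lam m₀ ≤ n := by
  conv_rhs => rw [← hlam.2.2]
  exact Finset.sum_le_sum_of_subset (Finset.Icc_subset_Icc_left (by omega))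

lemma NN_le_n (hlam : IsMP l n lam) {m₀ : ℕ} (hm : 1 ≤ m₀) (hml : m₀ ≤ l) (r : ℕ) :
    NN l n lam m₀ r ≤ n := by
  unfold NN
  have h1 := sum_colLen_le hlam hm hml r
  have h2 := Off_pred hlam hm hml
  have h3 := Off_le_n hlam (m₀ - 1)
  omega

end MP

section ColTab

variable {l n : ℕ} {lam : ℕ → ℕ → ℕ}

lemma colTab_eq (A : Node) :
    colTab l n lam A = NN l n lam A.2.2 (A.2.1 - 1) + A.1 := rfl

lemma col_sum_step {m₀ c : ℕ} (hc : 1 ≤ c) :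
    ∑ c' ∈ Finset.Icc 1 c, colLen n lam m₀ c' =
      ∑ c' ∈ Finset.Icc 1 (c - 1), colLen n lam m₀ c' + colLen n lam m₀ c := by
  have h1 : Finset.Icc 1 c = insert c (Finset.Icc 1 (c - 1)) := by
    ext a
    simp only [Finset.mem_Icc, Finset.mem_insert]
    omega
  rw [h1, Finset.sum_insert (by simp [Finset.mem_Icc]; omega)]
  omega

lemma colTab_le_NN (hlam : IsMP l n lam) {A : Node} (hA : InDiag lam A) {m₀ r : ℕ}
    (hm₀ : 1 ≤ m₀) (hml : m₀ ≤ l)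
    (hreg : m₀ < A.2.2 ∨ (A.2.2 = m₀ ∧ A.2.1 ≤ r)) :
    colTab l n lam A ≤ NN l n lam m₀ r := by
  have hrg := inDiag_ranges hlam hA
  obtain ⟨hr1, hr2, hc1, hc2, hm1, hm2⟩ := hrg
  have hrowlen : A.1 ≤ colLen n lam A.2.2 A.2.1 :=
    (colLen_iff hlam hr1 hr2).mp hA.2
  have hColRow : ∑ c' ∈ Finset.Icc 1 (A.2.1 - 1), colLen n lam A.2.2 c' + A.1 ≤
      compSize n lam A.2.2 := by
    have h1 := col_sum_step (lam := lam) (n := n) (m₀ := A.2.2) hc1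
    have h2 := sum_colLen_le hlam hm1 hm2 A.2.1
    omega
  rcases hreg with hlt | ⟨heq, hcr⟩
  · have h3 : Off l n lam (A.2.2 - 1) = compSize n lam A.2.2 + Off l n lam A.2.2 :=
      Off_pred hlam hm1 hm2
    have h4 : Off l n lam (A.2.2 - 1) ≤ Off l n lam m₀ := Off_le hlam (by omega)
    have h5 : Off l n lam m₀ ≤ NN l n lam m₀ r := Nat.le_add_right _ _
    rw [colTab_eq]
    unfold NN at *
    omega
  · rw [colTab_eq, heq]
    unfold NN
    have h1 := col_sum_step (lam := lam) (n := n) (m₀ := m₀) hc1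
    have h2 : ∑ c' ∈ Finset.Icc 1 A.2.1, colLen n lam m₀ c' ≤
        ∑ c' ∈ Finset.Icc 1 r, colLen n lam m₀ c' :=
      Finset.sum_le_sum_of_subset (Finset.Icc_subset_Icc_right hcr)
    rw [heq] at hrowlen
    omega

lemma NN_lt_colTab (hlam : IsMP l n lam) {A : Node} (hA : InDiag lam A) {m₀ r : ℕ}
    (hm₀ : 1 ≤ m₀) (hml : m₀ ≤ l)
    (hreg : A.2.2 < m₀ ∨ (A.2.2 = m₀ ∧ r < A.2.1)) :
    NN l n lam m₀ r < colTab l n lam A := by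
  have hrg := inDiag_ranges hlam hA
  obtain ⟨hr1, hr2, hc1, hc2, hm1, hm2⟩ := hrg
  rcases hreg with hlt | ⟨heq, hcr⟩
  · have h1 : Off l n lam (m₀ - 1) = compSize n lam m₀ + Off l n lam m₀ :=
      Off_pred hlam hm₀ hml
    have h2 : Off l n lam (m₀ - 1) ≤ Off l n lam A.2.2 := Off_le hlam (by omega)
    have h3 := sum_colLen_le hlam hm₀ hml r
    rw [colTab_eq]
    unfold NN at *
    omega
  · rw [colTab_eq, heq]
    unfold NN
    have h2 : ∑ c' ∈ Finset.Icc 1 r, colLen n lam m₀ c' ≤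
        ∑ c' ∈ Finset.Icc 1 (A.2.1 - 1), colLen n lam m₀ c' :=
      Finset.sum_le_sum_of_subset (Finset.Icc_subset_Icc_right (by omega))
    omega

lemma colTab_le_NN_iff (hlam : IsMP l n lam) {A : Node} (hA : InDiag lam A) {m₀ r : ℕ}
    (hm₀ : 1 ≤ m₀) (hml : m₀ ≤ l) :
    colTab l n lam A ≤ NN l n lam m₀ r ↔
      (m₀ < A.2.2 ∨ (A.2.2 = m₀ ∧ A.2.1 ≤ r)) := by
  constructor
  · intro h
    by_contra hc
    push_neg at hc
    have hreg : A.2.2 < m₀ ∨ (A.2.2 = m₀ ∧ r < A.2.1) := by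
      rcases Nat.lt_trichotomy A.2.2 m₀ with h1 | h1 | h1
      · exact Or.inl h1
      · exact Or.inr ⟨h1, by have := hc.2 h1; omega⟩
      · omega
    exact absurd h (Nat.not_le.mpr (NN_lt_colTab hlam hA hm₀ hml hreg))
  · exact colTab_le_NN hlam hA hm₀ hml

lemma colTab_pos (hlam : IsMP l n lam) {A : Node} (hA : InDiag lam A) :
    1 ≤ colTab l n lam A := by
  have hrg := inDiag_ranges hlam hA
  rw [colTab_eq]
  omega

variable {s : Node → ℕ} {ws : Equiv.Perm ℕ}

lemma colTab_inj (hs : IsTab n lam s)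
    (hws : IsPermOfTab n lam (colTab l n lam) s ws) {A B : Node}
    (hA : InDiag lam A) (hB : InDiag lam B)
    (h : colTab l n lam A = colTab l n lam B) : A = B :=
  hs.2.1 A B hA hB (by rw [← hws.2 A hA, ← hws.2 B hB, h])

lemma colTab_mem (hs : IsTab n lam s)
    (hws : IsPermOfTab n lam (colTab l n lam) s ws) {A : Node} (hA : InDiag lam A) :
    1 ≤ colTab l n lam A ∧ colTab l n lam A ≤ n := by
  have h1 := hs.1 A hA
  rw [← hws.2 A hA] at h1
  by_contra hc
  have h2 := hws.1 (colTab l n lam A) (by omega)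
  omega

lemma card_DiagF (hlam : IsMP l n lam) (hs : IsTab n lam s) :
    (DiagF l n lam).card = n := by
  have : (DiagF l n lam).card = (Finset.Icc 1 n).card := by
    apply Finset.card_bij (fun A _ => s A)
    · intro A hA
      rw [mem_DiagF hlam] at hA
      rw [Finset.mem_Icc]
      exact hs.1 A hA
    · intro A hA B hB h
      rw [mem_DiagF hlam] at hA hB
      exact hs.2.1 A B hA hB h
    · intro i hi
      rw [Finset.mem_Icc] at hi
      obtain ⟨A, hA, hsA⟩ := hs.2.2 i hi.1 hi.2
      exact ⟨A, (mem_DiagF hlam).mpr hA, hsA⟩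
  rw [this, Nat.card_Icc]
  omega

lemma colTab_surj (hlam : IsMP l n lam) (hs : IsTab n lam s)
    (hws : IsPermOfTab n lam (colTab l n lam) s ws) {a : ℕ} (ha1 : 1 ≤ a)
    (ha2 : a ≤ n) : ∃ A, InDiag lam A ∧ colTab l n lam A = a := by
  have himg : (DiagF l n lam).image (colTab l n lam) = Finset.Icc 1 n := by
    apply Finset.eq_of_subset_of_card_le
    · intro b hb
      rw [Finset.mem_image] at hb
      obtain ⟨A, hA, rfl⟩ := hb
      rw [mem_DiagF hlam] at hA
      rw [Finset.mem_Icc]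
      exact colTab_mem hs hws hA
    · rw [Finset.card_image_of_injOn, card_DiagF hlam hs, Nat.card_Icc]
      · omega
      · intro A hA B hB h
        rw [Finset.mem_coe, mem_DiagF hlam] at hA hB
        exact colTab_inj hs hws hA hB h
  have : a ∈ (DiagF l n lam).image (colTab l n lam) := by
    rw [himg, Finset.mem_Icc]
    exact ⟨ha1, ha2⟩
  rw [Finset.mem_image] at this
  obtain ⟨A, hA, h⟩ := this
  exact ⟨A, (mem_DiagF hlam).mp hA, h⟩

end ColTab

section DomTranslate

variable {l n : ℕ} {lam : ℕ → ℕ → ℕ}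

/-- Count of diagram nodes with entry at most `j` and reading-order position at most `k`. -/
noncomputable def FF (l n : ℕ) (lam : ℕ → ℕ → ℕ) (u : Node → ℕ) (j k : ℕ) : ℕ :=
  ((DiagF l n lam).filter fun A => u A ≤ j ∧ colTab l n lam A ≤ k).card

lemma card_filter_DiagF (P : Node → Prop) [DecidablePred P] :
    ((DiagF l n lam).filter P).card =
      ∑ m₀ ∈ Finset.Icc 1 l, ∑ c ∈ Finset.Icc 1 n, ∑ r ∈ Finset.Icc 1 n,
        if InDiag lam (r, c, m₀) ∧ P (r, c, m₀) then 1 else 0 := by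
  calc ((DiagF l n lam).filter P).card
      = ∑ A ∈ (Finset.Icc 1 n ×ˢ Finset.Icc 1 n ×ˢ Finset.Icc 1 l),
          (if InDiag lam A ∧ P A then 1 else 0) := by
        unfold DiagF
        rw [Finset.filter_filter, Finset.card_filter]
    _ = ∑ r ∈ Finset.Icc 1 n, ∑ c ∈ Finset.Icc 1 n, ∑ m₀ ∈ Finset.Icc 1 l,
          (if InDiag lam (r, c, m₀) ∧ P (r, c, m₀) then 1 else 0) := by
        rw [Finset.sum_product]
        exact Finset.sum_congr rfl fun r _ => Finset.sum_product ..
    _ = ∑ c ∈ Finset.Icc 1 n, ∑ r ∈ Finset.Icc 1 n, ∑ m₀ ∈ Finset.Icc 1 l,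
          (if InDiag lam (r, c, m₀) ∧ P (r, c, m₀) then 1 else 0) := Finset.sum_comm
    _ = ∑ c ∈ Finset.Icc 1 n, ∑ m₀ ∈ Finset.Icc 1 l, ∑ r ∈ Finset.Icc 1 n,
          (if InDiag lam (r, c, m₀) ∧ P (r, c, m₀) then 1 else 0) :=
        Finset.sum_congr rfl fun c _ => Finset.sum_comm
    _ = ∑ m₀ ∈ Finset.Icc 1 l, ∑ c ∈ Finset.Icc 1 n, ∑ r ∈ Finset.Icc 1 n,
          (if InDiag lam (r, c, m₀) ∧ P (r, c, m₀) then 1 else 0) := Finset.sum_comm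

/-- Inner column count. -/
noncomputable def gcol (l n : ℕ) (lam : ℕ → ℕ → ℕ) (u : Node → ℕ) (j m₁ c : ℕ) : ℕ :=
  ∑ r' ∈ Finset.Icc 1 n, if InDiag lam (r', c, m₁) ∧ u (r', c, m₁) ≤ j then 1 else 0

/-- Component count. -/
noncomputable def gcomp (l n : ℕ) (lam : ℕ → ℕ → ℕ) (u : Node → ℕ) (j m₁ : ℕ) : ℕ :=
  ∑ c ∈ Finset.Icc 1 n, gcol l n lam u j m₁ c

lemma shapeConj_eq_gcol (u : Node → ℕ) (j m' c : ℕ) (hc : 1 ≤ c) :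
    shapeConj l n lam u j m' c = gcol l n lam u j (l + 1 - m') c := by
  unfold shapeConj gcol
  rw [Finset.card_filter]
  apply Finset.sum_congr rfl
  intro r' _
  apply if_congr _ rfl rfl
  unfold InDiag
  simp only
  constructor
  · exact fun h => ⟨⟨hc, h.1⟩, h.2⟩
  · exact fun h => ⟨h.1.2, h.2⟩

lemma gcol_eq_zero (hlam : IsMP l n lam) {m₁ : ℕ} (u : Node → ℕ) (j : ℕ) {c : ℕ}
    (hc : n < c) : gcol l n lam u j m₁ c = 0 := by
  unfold gcol
  apply Finset.sum_eq_zero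
  intro r' hr'
  rw [Finset.mem_Icc] at hr'
  rw [if_neg]
  rintro ⟨hd, -⟩
  have := inDiag_ranges hlam hd
  simp only at this
  omega

lemma compSize_shapeConj (hlam : IsMP l n lam) (u : Node → ℕ) (j m' : ℕ) :
    compSize n (shapeConj l n lam u j) m' = gcomp l n lam u j (l + 1 - m') := by
  unfold compSize gcomp
  apply Finset.sum_congr rfl
  intro c hc
  rw [Finset.mem_Icc] at hc
  exact shapeConj_eq_gcol u j m' c hc.1

lemma sum_shapeConj_cols (hlam : IsMP l n lam) (u : Node → ℕ) (j m r : ℕ) :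
    ∑ c ∈ Finset.Icc 1 r, shapeConj l n lam u j m c =
      ∑ c ∈ Finset.Icc 1 n, if c ≤ r then gcol l n lam u j (l + 1 - m) c else 0 := by
  have hpt : ∀ c ∈ Finset.Icc 1 r, shapeConj l n lam u j m c =
      gcol l n lam u j (l + 1 - m) c := by
    intro c hc
    rw [Finset.mem_Icc] at hc
    exact shapeConj_eq_gcol u j m c hc.1
  rw [Finset.sum_congr rfl hpt]
  rcases le_or_gt r n with h | h
  · rw [← Finset.sum_filter]
    apply Finset.sum_congr _ fun _ _ => rfl
    ext c
    simp only [Finset.mem_filter, Finset.mem_Icc]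
    omega
  · have h1 : ∀ c ∈ Finset.Icc 1 n,
        (if c ≤ r then gcol l n lam u j (l + 1 - m) c else 0) =
          gcol l n lam u j (l + 1 - m) c := fun c hc =>
      if_pos (by rw [Finset.mem_Icc] at hc; omega)
    rw [Finset.sum_congr rfl h1]
    symm
    apply Finset.sum_subset (Finset.Icc_subset_Icc_right (by omega))
    intro c hc hc'
    rw [Finset.mem_Icc] at hc hc'
    exact gcol_eq_zero hlam u j (by omega)

lemma domSum_eq (hlam : IsMP l n lam) (u : Node → ℕ) (j m r : ℕ) (hm : 1 ≤ m)
    (hml : m ≤ l) :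
    (∑ m' ∈ Finset.Icc 1 (m - 1), compSize n (shapeConj l n lam u j) m') +
      ∑ r' ∈ Finset.Icc 1 r, shapeConj l n lam u j m r' =
    ((DiagF l n lam).filter fun A =>
      u A ≤ j ∧ (l + 1 - m < A.2.2 ∨ (A.2.2 = l + 1 - m ∧ A.2.1 ≤ r))).card := by
  set m₀ := l + 1 - m with hm₀def
  have hm₀1 : 1 ≤ m₀ := by omega
  have hm₀l : m₀ ≤ l := by omega
  -- left summand: reindex
  have hL : ∑ m' ∈ Finset.Icc 1 (m - 1), compSize n (shapeConj l n lam u j) m' =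
      ∑ m₁ ∈ Finset.Icc (m₀ + 1) l, gcomp l n lam u j m₁ := by
    rw [Finset.sum_congr rfl fun m' _ => compSize_shapeConj hlam u j m']
    apply Finset.sum_nbij' (fun m' => l + 1 - m') (fun m₁ => l + 1 - m₁)
    · intro a ha
      rw [Finset.mem_Icc] at ha ⊢
      omega
    · intro a ha
      rw [Finset.mem_Icc] at ha ⊢
      omega
    · intro a ha
      rw [Finset.mem_Icc] at ha
      omega
    · intro a ha
      rw [Finset.mem_Icc] at ha
      omega
    · intro a _
      rfl
  rw [hL, sum_shapeConj_cols hlam u j m r, ← hm₀def]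
  rw [card_filter_DiagF (fun A => u A ≤ j ∧ (m₀ < A.2.2 ∨ A.2.2 = m₀ ∧ A.2.1 ≤ r))]
  beta_reduce
  -- analyse the triple sum componentwise
  have hT : ∀ m₁ ∈ Finset.Icc 1 l,
      (∑ c ∈ Finset.Icc 1 n, ∑ r' ∈ Finset.Icc 1 n,
        if InDiag lam (r', c, m₁) ∧ (u (r', c, m₁) ≤ j ∧
          (m₀ < m₁ ∨ (m₁ = m₀ ∧ c ≤ r))) then 1 else 0) =
      if m₁ = m₀ then (∑ c ∈ Finset.Icc 1 n, if c ≤ r then gcol l n lam u j m₀ c else 0)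
      else if m₀ < m₁ then gcomp l n lam u j m₁ else 0 := by
    intro m₁ hm₁
    rcases Nat.lt_trichotomy m₁ m₀ with hc | hc | hc
    · rw [if_neg (by omega), if_neg (by omega)]
      apply Finset.sum_eq_zero
      intro c _
      apply Finset.sum_eq_zero
      intro r' _
      rw [if_neg]
      rintro ⟨-, -, hreg⟩
      omega
    · subst hc
      rw [if_pos rfl]
      apply Finset.sum_congr rfl
      intro c _
      by_cases hcr : c ≤ r
      · rw [if_pos hcr]
        unfold gcol
        apply Finset.sum_congr rfl
        intro r' _
        apply if_congr _ rfl rfl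
        constructor
        · exact fun h => ⟨h.1, h.2.1⟩
        · exact fun h => ⟨h.1, h.2, Or.inr ⟨rfl, hcr⟩⟩
      · rw [if_neg hcr]
        apply Finset.sum_eq_zero
        intro r' _
        rw [if_neg]
        rintro ⟨-, -, hreg⟩
        omega
    · rw [if_neg (by omega), if_pos hc]
      unfold gcomp gcol
      apply Finset.sum_congr rfl
      intro c _
      apply Finset.sum_congr rfl
      intro r' _
      apply if_congr _ rfl rfl
      constructor
      · exact fun h => ⟨h.1, h.2.1⟩
      · exact fun h => ⟨h.1, h.2, Or.inl hc⟩
  rw [Finset.sum_congr rfl hT]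
  -- split the outer sum at m₀
  have hIcc : Finset.Icc 1 l = Finset.Ioc 0 l := by
    ext a
    simp only [Finset.mem_Icc, Finset.mem_Ioc]
    omega
  have hIcc2 : Finset.Icc (m₀ + 1) l = Finset.Ioc m₀ l := by
    ext a
    simp only [Finset.mem_Icc, Finset.mem_Ioc]
    omega
  have hsplit := Finset.sum_Ioc_consecutive
    (fun m₁ => if m₁ = m₀ then (∑ c ∈ Finset.Icc 1 n, if c ≤ r then gcol l n lam u j m₀ c else 0)
      else if m₀ < m₁ then gcomp l n lam u j m₁ else 0)
    (Nat.zero_le m₀) hm₀l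
  rw [hIcc, ← hsplit]
  have h1 : ∑ m₁ ∈ Finset.Ioc 0 m₀,
      (if m₁ = m₀ then (∑ c ∈ Finset.Icc 1 n, if c ≤ r then gcol l n lam u j m₀ c else 0)
      else if m₀ < m₁ then gcomp l n lam u j m₁ else 0) =
      ∑ c ∈ Finset.Icc 1 n, if c ≤ r then gcol l n lam u j m₀ c else 0 := by
    have hio : Finset.Ioc 0 m₀ = insert m₀ (Finset.Ioc 0 (m₀ - 1)) := by
      ext a
      simp only [Finset.mem_Ioc, Finset.mem_insert]
      omega
    rw [hio, Finset.sum_insert (by simp only [Finset.mem_Ioc]; omega), if_pos rfl]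
    have : ∑ m₁ ∈ Finset.Ioc 0 (m₀ - 1),
        (if m₁ = m₀ then (∑ c ∈ Finset.Icc 1 n, if c ≤ r then gcol l n lam u j m₀ c else 0)
        else if m₀ < m₁ then gcomp l n lam u j m₁ else 0) = 0 := by
      apply Finset.sum_eq_zero
      intro m₁ hm₁
      rw [Finset.mem_Ioc] at hm₁
      rw [if_neg (by omega), if_neg (by omega)]
    omega
  have h2 : ∑ m₁ ∈ Finset.Ioc m₀ l,
      (if m₁ = m₀ then (∑ c ∈ Finset.Icc 1 n, if c ≤ r then gcol l n lam u j m₀ c else 0)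
      else if m₀ < m₁ then gcomp l n lam u j m₁ else 0) =
      ∑ m₁ ∈ Finset.Icc (m₀ + 1) l, gcomp l n lam u j m₁ := by
    rw [hIcc2]
    apply Finset.sum_congr rfl
    intro m₁ hm₁
    rw [Finset.mem_Ioc] at hm₁
    rw [if_neg (by omega), if_pos (by omega)]
  rw [h1, h2]
  omega

end DomTranslate

section Ladder

variable {l n : ℕ} {lam : ℕ → ℕ → ℕ} {s : Node → ℕ} {ws : Equiv.Perm ℕ}

lemma E_eq_FF (hlam : IsMP l n lam) (hs : IsTab n lam s)
    (hws : IsPermOfTab n lam (colTab l n lam) s ws) (j : ℕ) {k : ℕ} (hk : k ≤ n) :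
    E k j ws = FF l n lam s j k := by
  unfold E FF
  symm
  apply Finset.card_bij (fun A _ => colTab l n lam A)
  · intro A hA
    rw [Finset.mem_filter, mem_DiagF hlam] at hA
    obtain ⟨hd, hj, hck⟩ := hA
    rw [Finset.mem_filter, Finset.mem_Icc]
    have hm := colTab_mem hs hws hd
    rw [hws.2 A hd]
    exact ⟨⟨hm.1, hck⟩, hj⟩
  · intro A hA B hB h
    rw [Finset.mem_filter, mem_DiagF hlam] at hA hB
    exact colTab_inj hs hws hA.1 hB.1 h
  · intro a ha
    rw [Finset.mem_filter, Finset.mem_Icc] at ha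
    obtain ⟨⟨ha1, hak⟩, haj⟩ := ha
    obtain ⟨A, hA, hcA⟩ := colTab_surj hlam hs hws ha1 (le_trans hak hk)
    refine ⟨A, ?_, hcA⟩
    rw [Finset.mem_filter, mem_DiagF hlam]
    refine ⟨hA, ?_, by omega⟩
    rw [← hws.2 A hA, hcA]
    exact haj

lemma FF_zero (hlam : IsMP l n lam) (u : Node → ℕ) (j : ℕ) : FF l n lam u j 0 = 0 := by
  unfold FF
  rw [Finset.card_eq_zero, Finset.filter_eq_empty_iff]
  intro A hA
  rw [mem_DiagF hlam] at hA
  have := colTab_pos hlam hA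
  rintro ⟨-, h⟩
  omega

lemma FF_top (hlam : IsMP l n lam) (hs : IsTab n lam s)
    (hws : IsPermOfTab n lam (colTab l n lam) s ws) (u : Node → ℕ) (j : ℕ) {k : ℕ}
    (hk : n ≤ k) : FF l n lam u j k = FF l n lam u j n := by
  unfold FF
  congr 1
  apply Finset.filter_congr
  intro A hA
  rw [mem_DiagF hlam] at hA
  have := colTab_mem hs hws hA
  constructor
  · rintro ⟨h1, -⟩; exact ⟨h1, this.2⟩
  · rintro ⟨h1, -⟩; exact ⟨h1, by omega⟩

lemma NN_top (hlam : IsMP l n lam) (hl : 1 ≤ l) : NN l n lam 1 n = n := by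
  unfold NN
  rw [sum_colLen hlam (le_refl 1) hl]
  have h1 := Off_pred hlam (le_refl 1) hl
  norm_num at h1
  have h2 : Off l n lam 0 = n := by
    unfold Off compSize
    exact hlam.2.2
  omega

lemma NN_step (hlam : IsMP l n lam) {m₀ c₀ : ℕ} (hc : 1 ≤ c₀) :
    NN l n lam m₀ c₀ = NN l n lam m₀ (c₀ - 1) + colLen n lam m₀ c₀ := by
  unfold NN
  have := col_sum_step (lam := lam) (n := n) (m₀ := m₀) hc
  omega

lemma filter_initial_card {P : ℕ → Prop} [DecidablePred P] {L d : ℕ}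
    (hdown : ∀ a, 1 ≤ a → a + 1 ≤ L → P (a + 1) → P a) (hd : d ≤ L) :
    ((Finset.Icc 1 d).filter P).card =
      min d ((Finset.Icc 1 L).filter P).card := by
  classical
  have hclose : ∀ e a, 1 ≤ a → a + e ≤ L → P (a + e) → P a := by
    intro e
    induction e with
    | zero => intro a _ _ h; exact h
    | succ e ih =>
      intro a ha hae hP
      have : P (a + 1) := by
        apply ih (a + 1) (by omega) (by omega)
        have : a + 1 + e = a + (e + 1) := by omega
        rw [this]
        exact hP
      exact hdown a ha (by omega) this
  set v := ((Finset.Icc 1 L).filter P).card with hv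
  have hiff : ∀ a, 1 ≤ a → a ≤ L → (P a ↔ a ≤ v) := by
    intro a ha haL
    constructor
    · intro hP
      have hsub : Finset.Icc 1 a ⊆ (Finset.Icc 1 L).filter P := by
        intro b hb
        rw [Finset.mem_Icc] at hb
        rw [Finset.mem_filter, Finset.mem_Icc]
        exact ⟨⟨hb.1, by omega⟩, hclose (a - b) b hb.1 (by omega)
          (by rw [show b + (a - b) = a by omega]; exact hP)⟩
      have := Finset.card_le_card hsub
      rwa [Nat.card_Icc, Nat.add_sub_cancel] at this
    · intro hav
      by_contra hP
      have hsub : (Finset.Icc 1 L).filter P ⊆ Finset.Icc 1 (a - 1) := by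
        intro b hb
        rw [Finset.mem_filter, Finset.mem_Icc] at hb
        rw [Finset.mem_Icc]
        refine ⟨hb.1.1, ?_⟩
        by_contra hba
        exact hP (hclose (b - a) a ha (by omega)
          (by rw [show a + (b - a) = b by omega]; exact hb.2))
      have := Finset.card_le_card hsub
      rw [Nat.card_Icc] at this
      omega
  have hset : (Finset.Icc 1 d).filter P = Finset.Icc 1 (min d v) := by
    ext a
    rw [Finset.mem_filter, Finset.mem_Icc, Finset.mem_Icc]
    constructor
    · rintro ⟨⟨h1, h2⟩, hP⟩
      have := (hiff a h1 (by omega)).mp hP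
      omega
    · rintro ⟨h1, h2⟩
      exact ⟨⟨h1, by omega⟩, (hiff a h1 (by omega)).mpr (by omega)⟩
  rw [hset, Nat.card_Icc]
  omega

/-- The interval `(NN m₀ (c₀-1), NN m₀ (c₀-1) + d]` of reading-order positions is
occupied exactly by the top `d` cells of column `c₀` of component `m₀`. -/
lemma FF_interval (hlam : IsMP l n lam) (u : Node → ℕ) (j : ℕ) {m₀ c₀ d : ℕ}
    (hm₀ : 1 ≤ m₀) (hml : m₀ ≤ l) (hc₀ : 1 ≤ c₀)
    (hd : d ≤ colLen n lam m₀ c₀) :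
    FF l n lam u j (NN l n lam m₀ (c₀ - 1) + d) =
      FF l n lam u j (NN l n lam m₀ (c₀ - 1)) +
        ((Finset.Icc 1 d).filter fun r' => u (r', c₀, m₀) ≤ j).card := by
  classical
  set N := NN l n lam m₀ (c₀ - 1) with hN
  unfold FF
  have hsplit : ((DiagF l n lam).filter fun A => u A ≤ j ∧ colTab l n lam A ≤ N + d) =
      ((DiagF l n lam).filter fun A => u A ≤ j ∧ colTab l n lam A ≤ N) ∪
      ((DiagF l n lam).filter fun A =>
        (u A ≤ j ∧ N < colTab l n lam A) ∧ colTab l n lam A ≤ N + d) := by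
    rw [← Finset.filter_or]
    apply Finset.filter_congr
    intro A _
    constructor
    · rintro ⟨h1, h2⟩
      rcases le_or_gt (colTab l n lam A) N with h | h
      · exact Or.inl ⟨h1, h⟩
      · exact Or.inr ⟨⟨h1, h⟩, h2⟩
    · rintro (⟨h1, h2⟩ | ⟨⟨h1, h2⟩, h3⟩)
      · exact ⟨h1, by omega⟩
      · exact ⟨h1, h3⟩
  rw [hsplit, Finset.card_union_of_disjoint]
  · congr 1
    have key : ∀ A ∈ ((DiagF l n lam).filter fun A =>
        (u A ≤ j ∧ N < colTab l n lam A) ∧ colTab l n lam A ≤ N + d),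
        A = (A.1, c₀, m₀) ∧ 1 ≤ A.1 ∧ A.1 ≤ d ∧ u A ≤ j := by
      intro A hA
      rw [Finset.mem_filter, mem_DiagF hlam] at hA
      obtain ⟨hAd, ⟨hju, hgt⟩, hle⟩ := hA
      have hle' : colTab l n lam A ≤ NN l n lam m₀ c₀ := by
        rw [NN_step hlam hc₀]
        omega
      have hreg := (colTab_le_NN_iff hlam hAd hm₀ hml).mp hle'
      have hreg2 : ¬(m₀ < A.2.2 ∨ (A.2.2 = m₀ ∧ A.2.1 ≤ c₀ - 1)) := by
        intro hcon
        have := (colTab_le_NN_iff hlam hAd hm₀ hml (r := c₀ - 1)).mpr hcon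
        omega
      have hcomp : A.2.2 = m₀ ∧ A.2.1 = c₀ := by
        rcases hreg with h | ⟨h1, h2⟩
        · exact absurd (Or.inl h) hreg2
        · refine ⟨h1, ?_⟩
          by_contra hne
          exact hreg2 (Or.inr ⟨h1, by omega⟩)
      have hval : colTab l n lam A = N + A.1 := by
        rw [colTab_eq, hcomp.1, hcomp.2]
      have hr1 := (inDiag_ranges hlam hAd).1
      have hAeq : A = (A.1, c₀, m₀) := by
        obtain ⟨x, y, z⟩ := A
        simp only at hcomp
        rw [Prod.ext_iff, Prod.ext_iff]
        exact ⟨rfl, hcomp.2, hcomp.1⟩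
      exact ⟨hAeq, hr1, by omega, hju⟩
    apply Finset.card_bij (fun A _ => A.1)
    · intro A hA
      obtain ⟨hAeq, h1, h2, hju⟩ := key A hA
      rw [Finset.mem_filter, Finset.mem_Icc]
      refine ⟨⟨h1, h2⟩, ?_⟩
      rw [← hAeq]
      exact hju
    · intro A hA B hB h
      obtain ⟨hAeq, -, -, -⟩ := key A hA
      obtain ⟨hBeq, -, -, -⟩ := key B hB
      rw [hAeq, hBeq, h]
    · intro r' hr'
      rw [Finset.mem_filter, Finset.mem_Icc] at hr'
      obtain ⟨⟨h1, h2⟩, hju⟩ := hr'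
      have hLn : colLen n lam m₀ c₀ ≤ n := colLen_le_n (lam := lam) m₀ c₀
      have hrn : r' ≤ n := by omega
      have hInd : InDiag lam (r', c₀, m₀) :=
        ⟨hc₀, (colLen_iff hlam (m := m₀) (c := c₀) h1 hrn).mpr (by omega)⟩
      refine ⟨(r', c₀, m₀), ?_, rfl⟩
      rw [Finset.mem_filter, mem_DiagF hlam]
      have hval : colTab l n lam (r', c₀, m₀) = N + r' := by
        rw [colTab_eq]
      exact ⟨hInd, ⟨hju, by omega⟩, by omega⟩
  · rw [Finset.disjoint_filter]
    rintro A _ ⟨-, h1⟩ ⟨⟨-, h2⟩, -⟩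
    omega

end Ladder

section Final

variable {l n : ℕ} {lam : ℕ → ℕ → ℕ} {s t : Node → ℕ} {ws wt : Equiv.Perm ℕ}

lemma FF_col_min (hlam : IsMP l n lam) (u : Node → ℕ) (hucol : ColStrict lam u)
    (j : ℕ) {m₀ c₀ d : ℕ} (hm₀ : 1 ≤ m₀) (hml : m₀ ≤ l) (hc₀ : 1 ≤ c₀)
    (hd : d ≤ colLen n lam m₀ c₀) :
    FF l n lam u j (NN l n lam m₀ (c₀ - 1) + d) =
      FF l n lam u j (NN l n lam m₀ (c₀ - 1)) +
        min d (((Finset.Icc 1 (colLen n lam m₀ c₀)).filter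
          fun r' => u (r', c₀, m₀) ≤ j).card) := by
  rw [FF_interval hlam u j hm₀ hml hc₀ hd]
  congr 1
  apply filter_initial_card _ hd
  intro a ha haL hP
  have hLn : colLen n lam m₀ c₀ ≤ n := colLen_le_n (lam := lam) m₀ c₀
  have hIa : InDiag lam (a, c₀, m₀) :=
    ⟨hc₀, (colLen_iff hlam (m := m₀) (c := c₀) ha (by omega)).mpr (by omega)⟩
  have hIa1 : InDiag lam (a + 1, c₀, m₀) :=
    ⟨hc₀, (colLen_iff hlam (m := m₀) (c := c₀) (by omega) (by omega)).mpr (by omega)⟩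
  have := hucol a c₀ m₀ hIa hIa1
  omega

lemma region_card_eq_FF (hlam : IsMP l n lam) (u : Node → ℕ) (j : ℕ) {m₀ r : ℕ}
    (hm₀ : 1 ≤ m₀) (hml : m₀ ≤ l) :
    ((DiagF l n lam).filter fun A =>
        u A ≤ j ∧ (m₀ < A.2.2 ∨ (A.2.2 = m₀ ∧ A.2.1 ≤ r))).card =
      FF l n lam u j (NN l n lam m₀ r) := by
  unfold FF
  congr 1
  apply Finset.filter_congr
  intro A hA
  rw [mem_DiagF hlam] at hA
  constructor
  · rintro ⟨h1, h2⟩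
    exact ⟨h1, (colTab_le_NN_iff hlam hA hm₀ hml).mpr h2⟩
  · rintro ⟨h1, h2⟩
    exact ⟨h1, (colTab_le_NN_iff hlam hA hm₀ hml).mp h2⟩

lemma FF_j_zero (hlam : IsMP l n lam) (hu : IsTab n lam s) (k : ℕ) :
    FF l n lam s 0 k = 0 := by
  unfold FF
  rw [Finset.card_eq_zero, Finset.filter_eq_empty_iff]
  intro A hA
  rw [mem_DiagF hlam] at hA
  have := (hu.1 A hA).1
  rintro ⟨h1, -⟩
  omega

lemma FF_j_top (hlam : IsMP l n lam) (hu : IsTab n lam s) {j : ℕ} (hj : n ≤ j) (k : ℕ) :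
    FF l n lam s j k = FF l n lam s n k := by
  unfold FF
  congr 1
  apply Finset.filter_congr
  intro A hA
  rw [mem_DiagF hlam] at hA
  have := (hu.1 A hA).2
  constructor
  · rintro ⟨-, h2⟩; exact ⟨by omega, h2⟩
  · rintro ⟨-, h2⟩; exact ⟨by omega, h2⟩

lemma E_tail {w : Equiv.Perm ℕ} (hw : PermOf n w) {k : ℕ} (hk : n ≤ k) (j : ℕ) :
    E k j w = E n j w + ((Finset.Ioc n k).filter fun a => a ≤ j).card := by
  unfold E
  have hun : Finset.Icc 1 k = Finset.Icc 1 n ∪ Finset.Ioc n k := by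
    ext a
    simp only [Finset.mem_union, Finset.mem_Icc, Finset.mem_Ioc]
    omega
  rw [hun, Finset.filter_union, Finset.card_union_of_disjoint]
  · have hfe : (Finset.Ioc n k).filter (fun a => w a ≤ j) =
        (Finset.Ioc n k).filter (fun a => a ≤ j) := by
      apply Finset.filter_congr
      intro a ha
      rw [Finset.mem_Ioc] at ha
      rw [hw a (by omega)]
    rw [hfe]
  · apply Finset.disjoint_filter_filter
    rw [Finset.disjoint_left]
    intro a h1 h2
    rw [Finset.mem_Icc] at h1
    rw [Finset.mem_Ioc] at h2
    omega

lemma FF_dom_all (hlam : IsMP l n lam) (hl : 1 ≤ l)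
    (hs : IsTab n lam s) (ht : IsTab n lam t)
    (hscol : ColStrict lam s) (htcol : ColStrict lam t)
    (hws : IsPermOfTab n lam (colTab l n lam) s ws)
    (hdom : ∀ m₀ r, 1 ≤ m₀ → m₀ ≤ l → ∀ j,
      FF l n lam t j (NN l n lam m₀ r) ≤ FF l n lam s j (NN l n lam m₀ r)) :
    ∀ k j, FF l n lam t j k ≤ FF l n lam s j k := by
  intro k j
  rcases Nat.eq_zero_or_pos k with rfl | hk1
  · rw [FF_zero hlam, FF_zero hlam]
  rcases le_or_gt k n with hkn | hkn
  · obtain ⟨A, hA, hcA⟩ := colTab_surj hlam hs hws hk1 hkn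
    have hrg := inDiag_ranges hlam hA
    have hm₀ : 1 ≤ A.2.2 := hrg.2.2.2.2.1
    have hml : A.2.2 ≤ l := hrg.2.2.2.2.2
    have hc₀ : 1 ≤ A.2.1 := hrg.2.2.1
    have hrow : A.1 ≤ colLen n lam A.2.2 A.2.1 :=
      (colLen_iff hlam (m := A.2.2) (c := A.2.1) hrg.1 hrg.2.1).mp hA.2
    have hkform : k = NN l n lam A.2.2 (A.2.1 - 1) + A.1 := by
      rw [← hcA, colTab_eq]
    have hs1 := FF_col_min hlam s hscol j hm₀ hml hc₀ hrow
    have ht1 := FF_col_min hlam t htcol j hm₀ hml hc₀ hrow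
    have hsfull := FF_interval hlam s j hm₀ hml hc₀ (le_refl (colLen n lam A.2.2 A.2.1))
    have htfull := FF_interval hlam t j hm₀ hml hc₀ (le_refl (colLen n lam A.2.2 A.2.1))
    have hstep : NN l n lam A.2.2 (A.2.1 - 1) + colLen n lam A.2.2 A.2.1 =
        NN l n lam A.2.2 A.2.1 := (NN_step hlam hc₀).symm
    rw [hstep] at hsfull htfull
    have hd1 := hdom A.2.2 (A.2.1 - 1) hm₀ hml j
    have hd2 := hdom A.2.2 A.2.1 hm₀ hml j
    rw [hsfull] at hd2
    rw [htfull] at hd2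
    rw [hkform, hs1, ht1]
    omega
  · rw [FF_top hlam hs hws t j (le_of_lt hkn), FF_top hlam hs hws s j (le_of_lt hkn)]
    have := hdom 1 n (le_refl 1) hl j
    rwa [NN_top hlam hl] at this

end Final

/-- For column-strict `λ`-tableaux `s, t`: `w_s ≤ w_t` in the Bruhat
order iff `Shape(s↓m)' ⊵ Shape(t↓m)'` for all `m = 1,…,n`. -/
theorem bruhat_iff_conj_shape_dominance (l n : ℕ) (hl : 1 ≤ l) (hn : 1 ≤ n)
    (lam : ℕ → ℕ → ℕ) (hlam : IsMP l n lam)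
    (s t : Node → ℕ) (hs : IsTab n lam s) (ht : IsTab n lam t)
    (hscol : ColStrict lam s) (htcol : ColStrict lam t)
    (ws wt : Equiv.Perm ℕ)
    (hws : IsPermOfTab n lam (colTab l n lam) s ws)
    (hwt : IsPermOfTab n lam (colTab l n lam) t wt) :
    BruhatLE n ws wt ↔
      ∀ m, 1 ≤ m → m ≤ n → Dom l n (shapeConj l n lam s m) (shapeConj l n lam t m) := by
  constructor
  · intro hble j hj1 hjn
    have hdot := bruhat_imp_dot hble
    intro m r hm1 hml
    rw [domSum_eq hlam t j m r hm1 hml, domSum_eq hlam s j m r hm1 hml,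
        region_card_eq_FF hlam t j (by omega) (by omega),
        region_card_eq_FF hlam s j (by omega) (by omega),
        ← E_eq_FF hlam ht hwt j (NN_le_n hlam (by omega) (by omega) r),
        ← E_eq_FF hlam hs hws j (NN_le_n hlam (by omega) (by omega) r)]
    exact hdot _ j
  · intro hdom
    have key : ∀ m₀ r, 1 ≤ m₀ → m₀ ≤ l → ∀ j, 1 ≤ j → j ≤ n →
        FF l n lam t j (NN l n lam m₀ r) ≤ FF l n lam s j (NN l n lam m₀ r) := by
      intro m₀ r hm₀ hml j hj1 hjn
      have hD := hdom j hj1 hjn (l + 1 - m₀) r (by omega) (by omega)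
      rw [domSum_eq hlam t j (l + 1 - m₀) r (by omega) (by omega),
          domSum_eq hlam s j (l + 1 - m₀) r (by omega) (by omega)] at hD
      have hmm : l + 1 - (l + 1 - m₀) = m₀ := by omega
      rw [hmm] at hD
      rw [region_card_eq_FF hlam t j hm₀ hml, region_card_eq_FF hlam s j hm₀ hml] at hD
      exact hD
    have hFF : ∀ m₀ r, 1 ≤ m₀ → m₀ ≤ l → ∀ j,
        FF l n lam t j (NN l n lam m₀ r) ≤ FF l n lam s j (NN l n lam m₀ r) := by
      intro m₀ r hm₀ hml j
      rcases Nat.eq_zero_or_pos j with rfl | hj1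
      · rw [FF_j_zero hlam ht, FF_j_zero hlam hs]
      · rcases le_or_gt j n with hjn | hjn
        · exact key m₀ r hm₀ hml j hj1 hjn
        · rw [FF_j_top hlam ht (by omega), FF_j_top hlam hs (by omega)]
          exact key m₀ r hm₀ hml n hn (le_refl n)
    have hall := FF_dom_all hlam hl hs ht hscol htcol hws hFF
    have hdot : Dot ws wt := by
      intro k j
      rcases le_or_gt k n with hkn | hkn
      · rw [E_eq_FF hlam hs hws j hkn, E_eq_FF hlam ht hwt j hkn]
        exact hall k j
      · rw [E_tail hwt.1 (le_of_lt hkn) j, E_tail hws.1 (le_of_lt hkn) j]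
        have h1 := hall n j
        rw [← E_eq_FF hlam hs hws j (le_refl n), ← E_eq_FF hlam ht hwt j (le_refl n)] at h1
        omega
    exact dot_imp_bruhat (inv n wt) ws wt hws.1 hwt.1 rfl hdot

end FS
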